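/- The interval map T preserves Lebesgue measure: for every Borel set A ⊆ [0,1), Leb(T⁻¹(A)) = Leb(A). -/

import Mathlib

open MeasureTheory Set Filter

noncomputable section

namespace Gouezel

/-- `b a n = 4 * ∑_{k=1}^n a_k` (left endpoints of the intervals `I_n`). -/
def b (a : ℕ → ℝ) (n : ℕ) : ℝ := 4 * ∑ k ∈ Finset.range n, a (k + 1)

/-- `b_∞ = 4 * ∑_{n=1}^∞ a_n`. -/
def binf (a : ℕ → ℝ) : ℝ := 4 * ∑' n : ℕ, a (n + 1)

/-- The length `|J| = 1 - b_∞` of the interval `J = [b_∞, 1)`. -/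
def lenJ (a : ℕ → ℝ) : ℝ := 1 - binf a

/-- `v_n'(x) = a_n (1 + 2 cos²(2π n⁴ x))`. -/
def vd (a : ℕ → ℝ) (n : ℕ) (x : ℝ) : ℝ :=
  a n * (1 + 2 * Real.cos (2 * Real.pi * (n : ℝ) ^ 4 * x) ^ 2)

/-- `w_n'(x) = a_n (1 + 2 sin²(2π n⁴ x))`. -/
def wd (a : ℕ → ℝ) (n : ℕ) (x : ℝ) : ℝ :=
  a n * (1 + 2 * Real.sin (2 * Real.pi * (n : ℝ) ^ 4 * x) ^ 2)

/-- The inverse branch `v_n(x) = b_{n-1} + ∫_0^x v_n'(t) dt`. -/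
def v (a : ℕ → ℝ) (n : ℕ) (x : ℝ) : ℝ := b a (n - 1) + ∫ t in (0:ℝ)..x, vd a n t

/-- The inverse branch `w_n(x) = b_{n-1} + 2 a_n + ∫_0^x w_n'(t) dt`. -/
def w (a : ℕ → ℝ) (n : ℕ) (x : ℝ) : ℝ :=
  b a (n - 1) + 2 * a n + ∫ t in (0:ℝ)..x, wd a n t

/-- The affine inverse branches `u_j(x) = b_∞ + (j-1)|J|/N + (|J|/N) x`, `1 ≤ j ≤ N`. -/
def u (a : ℕ → ℝ) (N : ℕ) (j : ℕ) (x : ℝ) : ℝ :=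
  binf a + ((j : ℝ) - 1) * (lenJ a / N) + (lenJ a / N) * x

/-- The transfer operator on complex-valued functions. -/
def L (a : ℕ → ℝ) (N : ℕ) (f : ℝ → ℂ) (x : ℝ) : ℂ :=
  (∑' n : ℕ, ((vd a (n + 1) x : ℂ) * f (v a (n + 1) x)
      + (wd a (n + 1) x : ℂ) * f (w a (n + 1) x)))
    + ((lenJ a / (N : ℝ) : ℝ) : ℂ) * ∑ j ∈ Finset.range N, f (u a N (j + 1) x)

/-- The transfer operator on real-valued functions. -/
def LR (a : ℕ → ℝ) (N : ℕ) (f : ℝ → ℝ) (x : ℝ) : ℝ :=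
  (∑' n : ℕ, (vd a (n + 1) x * f (v a (n + 1) x) + wd a (n + 1) x * f (w a (n + 1) x)))
    + (lenJ a / N) * ∑ j ∈ Finset.range N, f (u a N (j + 1) x)

/-- The part `L_n` of the transfer operator coming from the branches `v_n, w_n`. -/
def Ln (a : ℕ → ℝ) (n : ℕ) (f : ℝ → ℂ) (x : ℝ) : ℂ :=
  (vd a n x : ℂ) * f (v a n x) + (wd a n x : ℂ) * f (w a n x)

/-- Sup norm of `f` on `[0,1)`. -/
def supNorm (f : ℝ → ℂ) : ℝ := ⨆ x : Ico (0:ℝ) 1, ‖f x.1‖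

/-- Best Lipschitz constant of `f` on `[0,1)` (the term at `x = y` is `0/0 = 0`). -/
def lipConst (f : ℝ → ℂ) : ℝ :=
  ⨆ p : Ico (0:ℝ) 1 × Ico (0:ℝ) 1, ‖f p.1.1 - f p.2.1‖ / |p.1.1 - p.2.1|

/-- Lipschitz norm `‖f‖_Lip = sup|f| + Lip(f)` on `[0,1)`. -/
def lipNorm (f : ℝ → ℂ) : ℝ := supNorm f + lipConst f

/-- `f` is bounded and Lipschitz on `[0,1)`. -/
def BddLip (f : ℝ → ℂ) : Prop :=
  ∃ K : ℝ, (∀ x ∈ Ico (0:ℝ) 1, ‖f x‖ ≤ K) ∧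
    ∀ x ∈ Ico (0:ℝ) 1, ∀ y ∈ Ico (0:ℝ) 1, ‖f x - f y‖ ≤ K * |x - y|

/-- The specific choice `a_n = 1/(100 n³)`. -/
def aa (n : ℕ) : ℝ := 1 / (100 * (n : ℝ) ^ 3)

/-- Standing hypotheses on the sequence `(a_n)`: positivity and `∑ a_n < 1/4`. -/
def StdHyp (a : ℕ → ℝ) : Prop :=
  (∀ n : ℕ, 1 ≤ n → 0 < a n) ∧ Summable (fun n : ℕ => a (n + 1)) ∧
    (∑' n : ℕ, a (n + 1)) < 1 / 4

/-- `T : [0,1) → [0,1)` has the maps `v_n, w_n` (`n ≥ 1`) and `u_j` (`1 ≤ j ≤ N`)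
as inverse branches. -/
def InverseBranches (a : ℕ → ℝ) (N : ℕ) (T : ℝ → ℝ) : Prop :=
  MapsTo T (Ico (0:ℝ) 1) (Ico (0:ℝ) 1) ∧
    ∀ x ∈ Ico (0:ℝ) 1,
      (∀ n : ℕ, 1 ≤ n → T (v a n x) = x ∧ T (w a n x) = x) ∧
      (∀ j : ℕ, 1 ≤ j → j ≤ N → T (u a N j x) = x)


section Aux

open intervalIntegral ENNReal

lemma continuous_vd (a : ℕ → ℝ) (n : ℕ) : Continuous (vd a n) := by
  unfold vd; fun_prop

lemma continuous_wd (a : ℕ → ℝ) (n : ℕ) : Continuous (wd a n) := by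
  unfold wd; fun_prop

lemma hasDerivAt_v (a : ℕ → ℝ) (n : ℕ) (x : ℝ) : HasDerivAt (v a n) (vd a n x) x :=
  (((continuous_vd a n).integral_hasStrictDerivAt 0 x).hasDerivAt).const_add (b a (n-1))

lemma hasDerivAt_w (a : ℕ → ℝ) (n : ℕ) (x : ℝ) : HasDerivAt (w a n) (wd a n x) x :=
  (((continuous_wd a n).integral_hasStrictDerivAt 0 x).hasDerivAt).const_add (b a (n-1) + 2 * a n)

lemma vd_pos {a : ℕ → ℝ} {n : ℕ} (h : 0 < a n) (x : ℝ) : 0 < vd a n x := by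
  unfold vd; nlinarith [sq_nonneg (Real.cos (2 * Real.pi * (n : ℝ) ^ 4 * x))]

lemma wd_pos {a : ℕ → ℝ} {n : ℕ} (h : 0 < a n) (x : ℝ) : 0 < wd a n x := by
  unfold wd; nlinarith [sq_nonneg (Real.sin (2 * Real.pi * (n : ℝ) ^ 4 * x))]

lemma vd_add_wd (a : ℕ → ℝ) (n : ℕ) (x : ℝ) : vd a n x + wd a n x = 4 * a n := by
  unfold vd wd
  linear_combination (2 * a n) * Real.sin_sq_add_cos_sq (2 * Real.pi * (n : ℝ) ^ 4 * x)

lemma strictMono_v {a : ℕ → ℝ} {n : ℕ} (h : 0 < a n) : StrictMono (v a n) :=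
  strictMono_of_hasDerivAt_pos (hasDerivAt_v a n) (fun x => vd_pos h x)

lemma strictMono_w {a : ℕ → ℝ} {n : ℕ} (h : 0 < a n) : StrictMono (w a n) :=
  strictMono_of_hasDerivAt_pos (hasDerivAt_w a n) (fun x => wd_pos h x)

lemma continuous_v (a : ℕ → ℝ) (n : ℕ) : Continuous (v a n) :=
  continuous_iff_continuousAt.2 fun x => (hasDerivAt_v a n x).continuousAt

lemma continuous_w (a : ℕ → ℝ) (n : ℕ) : Continuous (w a n) :=
  continuous_iff_continuousAt.2 fun x => (hasDerivAt_w a n x).continuousAt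

lemma v_zero (a : ℕ → ℝ) (n : ℕ) : v a n 0 = b a (n-1) := by simp [v]

lemma w_zero (a : ℕ → ℝ) (n : ℕ) : w a n 0 = b a (n-1) + 2 * a n := by simp [w]

lemma int_cos_sq (n : ℕ) (hn : 1 ≤ n) :
    ∫ t in (0:ℝ)..1, Real.cos (2 * Real.pi * (n : ℝ) ^ 4 * t) ^ 2 = 1/2 := by
  have hn0 : (0:ℝ) < (n:ℝ) := by exact_mod_cast hn
  have hcpos : 0 < 2 * Real.pi * (n : ℝ) ^ 4 := by positivity
  have hc : 2 * Real.pi * (n : ℝ) ^ 4 ≠ 0 := ne_of_gt hcpos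
  have hsin : Real.sin (2 * Real.pi * (n : ℝ) ^ 4) = 0 := by
    have h : 2 * Real.pi * (n : ℝ) ^ 4 = ((2 * n ^ 4 : ℕ) : ℝ) * Real.pi := by push_cast; ring
    rw [h, Real.sin_nat_mul_pi]
  have h := intervalIntegral.integral_comp_mul_left (a := (0:ℝ)) (b := 1)
    (fun x => Real.cos x ^ 2) hc
  simp only [mul_zero, mul_one] at h
  rw [h, integral_cos_sq, hsin]
  simp only [smul_eq_mul, mul_zero, Real.sin_zero, Real.cos_zero, sub_zero, zero_mul, zero_sub,
    neg_zero, zero_add, one_mul]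
  field_simp

lemma int_sin_sq (n : ℕ) (hn : 1 ≤ n) :
    ∫ t in (0:ℝ)..1, Real.sin (2 * Real.pi * (n : ℝ) ^ 4 * t) ^ 2 = 1/2 := by
  have hn0 : (0:ℝ) < (n:ℝ) := by exact_mod_cast hn
  have hcpos : 0 < 2 * Real.pi * (n : ℝ) ^ 4 := by positivity
  have hc : 2 * Real.pi * (n : ℝ) ^ 4 ≠ 0 := ne_of_gt hcpos
  have hsin : Real.sin (2 * Real.pi * (n : ℝ) ^ 4) = 0 := by
    have h : 2 * Real.pi * (n : ℝ) ^ 4 = ((2 * n ^ 4 : ℕ) : ℝ) * Real.pi := by push_cast; ring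
    rw [h, Real.sin_nat_mul_pi]
  have h := intervalIntegral.integral_comp_mul_left (a := (0:ℝ)) (b := 1)
    (fun x => Real.sin x ^ 2) hc
  simp only [mul_zero, mul_one] at h
  rw [h, integral_sin_sq, hsin]
  simp only [smul_eq_mul, mul_zero, Real.sin_zero, Real.cos_zero, sub_zero, zero_mul, zero_sub,
    neg_zero, zero_add, one_mul]
  field_simp

lemma v_one (a : ℕ → ℝ) (n : ℕ) (hn : 1 ≤ n) : v a n 1 = b a (n-1) + 2 * a n := by
  have hi : ∫ t in (0:ℝ)..1, vd a n t = 2 * a n := by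
    unfold vd
    rw [intervalIntegral.integral_const_mul,
      intervalIntegral.integral_add (intervalIntegrable_const)
        ((by fun_prop : Continuous fun t =>
          2 * Real.cos (2 * Real.pi * (n : ℝ) ^ 4 * t) ^ 2).intervalIntegrable 0 1),
      intervalIntegral.integral_const_mul, int_cos_sq n hn]
    simp
    ring
  rw [v, hi]

lemma w_one (a : ℕ → ℝ) (n : ℕ) (hn : 1 ≤ n) : w a n 1 = b a (n-1) + 4 * a n := by
  have hi : ∫ t in (0:ℝ)..1, wd a n t = 2 * a n := by
    unfold wd
    rw [intervalIntegral.integral_const_mul,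
      intervalIntegral.integral_add (intervalIntegrable_const)
        ((by fun_prop : Continuous fun t =>
          2 * Real.sin (2 * Real.pi * (n : ℝ) ^ 4 * t) ^ 2).intervalIntegrable 0 1),
      intervalIntegral.integral_const_mul, int_sin_sq n hn]
    simp
    ring
  rw [w, hi]; ring

lemma image_Ico01 {f : ℝ → ℝ} (hc : Continuous f) (hm : StrictMono f) :
    f '' Ico (0:ℝ) 1 = Ico (f 0) (f 1) := by
  refine Subset.antisymm ?_ (intermediate_value_Ico (by norm_num) hc.continuousOn)
  rintro y ⟨x, ⟨h0, h1⟩, rfl⟩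
  exact ⟨hm.monotone h0, hm h1⟩

lemma volume_image_of_deriv {f f' : ℝ → ℝ} {s : Set ℝ} (hs : MeasurableSet s)
    (hf' : ∀ x, HasDerivAt f (f' x) x) (hf : Function.Injective f)
    (hnn : ∀ x, 0 ≤ f' x) :
    volume (f '' s) = ∫⁻ x in s, ENNReal.ofReal (f' x) := by
  have h := lintegral_abs_det_fderiv_eq_addHaar_image volume hs
    (f' := fun x => ContinuousLinearMap.smulRight (1 : ℝ →L[ℝ] ℝ) (f' x))
    (fun x _ => ((hf' x).hasDerivWithinAt).hasFDerivWithinAt) hf.injOn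
  simp only [ContinuousLinearMap.smulRight_one_eq_toSpanSingleton,
    ContinuousLinearMap.det_toSpanSingleton] at h
  rw [← h]
  exact lintegral_congr fun x => by rw [abs_of_nonneg (hnn x)]

lemma b_zero (a : ℕ → ℝ) : b a 0 = 0 := by simp [b]

lemma b_succ (a : ℕ → ℝ) (n : ℕ) : b a (n+1) = b a n + 4 * a (n+1) := by
  simp [b, Finset.sum_range_succ]; ring

lemma b_mono {a : ℕ → ℝ} (hpos : ∀ n, 1 ≤ n → 0 < a n) : Monotone (b a) :=
  monotone_nat_of_le_succ fun n => by
    have := hpos (n+1) (by omega); rw [b_succ]; linarith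

lemma b_nonneg {a : ℕ → ℝ} (hpos : ∀ n, 1 ≤ n → 0 < a n) (n : ℕ) : 0 ≤ b a n := by
  have := b_mono hpos (Nat.zero_le n)
  rwa [b_zero] at this

lemma b_le_binf {a : ℕ → ℝ} (hpos : ∀ n, 1 ≤ n → 0 < a n)
    (hsum : Summable fun n : ℕ => a (n+1)) (n : ℕ) : b a n ≤ binf a := by
  unfold b binf
  have h := Summable.sum_le_tsum (Finset.range n) (fun i _ => (hpos (i+1) (by omega)).le) hsum
  linarith

lemma tendsto_b {a : ℕ → ℝ} (hsum : Summable fun n : ℕ => a (n+1)) :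
    Tendsto (b a) atTop (nhds (binf a)) := by
  have h := hsum.hasSum.tendsto_sum_nat
  exact h.const_mul 4

lemma cover_b {a : ℕ → ℝ} (hpos : ∀ n, 1 ≤ n → 0 < a n)
    (hsum : Summable fun n : ℕ => a (n+1)) {x : ℝ}
    (hx : x ∈ Ico 0 (binf a)) : ∃ n : ℕ, x ∈ Ico (b a n) (b a (n+1)) := by
  have hex : ∃ n, x < b a n := by
    by_contra h
    push_neg at h
    have : binf a ≤ x := le_of_tendsto (tendsto_b hsum) (Eventually.of_forall h)
    linarith [hx.2]
  classical
  have hm := Nat.find_spec hex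
  have hm0 : Nat.find hex ≠ 0 := by
    intro h; rw [h, b_zero] at hm; linarith [hx.1]
  obtain ⟨k, hk⟩ := Nat.exists_eq_succ_of_ne_zero hm0
  refine ⟨k, ?_, ?_⟩
  · have h2 := Nat.find_min hex (by omega : k < Nat.find hex)
    push_neg at h2; exact h2
  · rw [hk] at hm; exact hm

lemma u_eq (a : ℕ → ℝ) (N j : ℕ) (x : ℝ) :
    u a N (j+1) x = (binf a + j * (lenJ a / N)) + (lenJ a / N) * x := by
  unfold u; push_cast; ring

lemma hasDerivAt_u (a : ℕ → ℝ) (N j : ℕ) (x : ℝ) :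
    HasDerivAt (u a N j) (lenJ a / N) x := by
  unfold u
  simpa using (((hasDerivAt_id x).const_mul (lenJ a / N)).const_add
    (binf a + ((j : ℝ) - 1) * (lenJ a / N)))

lemma strictMono_u {a : ℕ → ℝ} {N : ℕ} (hc : 0 < lenJ a / N) (j : ℕ) :
    StrictMono (u a N j) := by
  intro x y h
  unfold u
  have := mul_lt_mul_of_pos_left h hc
  linarith

lemma continuous_u (a : ℕ → ℝ) (N j : ℕ) : Continuous (u a N j) := by
  unfold u; fun_prop

lemma cover_u {a : ℕ → ℝ} {N : ℕ} (hN : 1 ≤ N) (hL : 0 < lenJ a) {x : ℝ}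
    (hx : x ∈ Ico (binf a) 1) :
    ∃ j : ℕ, j < N ∧ binf a + j * (lenJ a / N) ≤ x
      ∧ x < binf a + ((j:ℝ)+1) * (lenJ a / N) := by
  have hN0 : (N:ℝ) ≠ 0 := Nat.cast_ne_zero.2 (by omega)
  have hNL : (N:ℝ) * (lenJ a / N) = lenJ a := by field_simp
  have hPN : x < binf a + (N:ℝ) * (lenJ a / N) := by
    rw [hNL]; unfold lenJ; linarith [hx.2]
  classical
  have hex : ∃ m : ℕ, x < binf a + (m:ℝ) * (lenJ a / N) := ⟨N, hPN⟩
  have hm := Nat.find_spec hex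
  have hm0 : Nat.find hex ≠ 0 := by
    intro h; rw [h] at hm; push_cast at hm; linarith [hx.1]
  obtain ⟨k, hk⟩ := Nat.exists_eq_succ_of_ne_zero hm0
  have hfind_le : Nat.find hex ≤ N := Nat.find_le hPN
  refine ⟨k, by omega, ?_, ?_⟩
  · have h2 := Nat.find_min hex (by omega : k < Nat.find hex)
    push_neg at h2; exact h2
  · rw [hk] at hm; push_cast at hm; linarith

end Aux

/-- the map `T` preserves Lebesgue measure: for every Borel set
`A ⊆ [0,1)`, `Leb(T⁻¹(A)) = Leb(A)`. -/
theorem stmt0 (a : ℕ → ℝ) (N : ℕ) (hN : 1 ≤ N) (ha : StdHyp a)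
    (T : ℝ → ℝ) (hT : InverseBranches a N T) :
    ∀ A : Set ℝ, A ⊆ Ico (0:ℝ) 1 → MeasurableSet A →
      volume (T ⁻¹' A ∩ Ico (0:ℝ) 1) = volume A := by
  intro A hA hAm
  obtain ⟨hpos, hsum, hlt⟩ := ha
  obtain ⟨hTmaps, hTbr⟩ := hT
  have hbinf_lt : binf a < 1 := by unfold binf; linarith
  have hbinf_nn : 0 ≤ binf a := by
    have h0 : (0:ℝ) ≤ ∑' n : ℕ, a (n+1) := tsum_nonneg fun n => (hpos (n+1) (by omega)).le
    unfold binf; linarith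
  have hL : 0 < lenJ a := by unfold lenJ; linarith
  have hNR : (0:ℝ) < N := by exact_mod_cast hN
  have hc : 0 < lenJ a / N := div_pos hL hNR
  have hposn : ∀ n : ℕ, 0 < a (n+1) := fun n => hpos (n+1) (by omega)
  -- exact images of [0,1) under the branches
  have hvim : ∀ n : ℕ, v a (n+1) '' (Ico 0 1) = Ico (b a n) (b a n + 2 * a (n+1)) := by
    intro n
    rw [image_Ico01 (continuous_v a (n+1)) (strictMono_v (hposn n)), v_zero,
      v_one a (n+1) (by omega)]
    simp
  have hwim : ∀ n : ℕ, w a (n+1) '' (Ico 0 1) = Ico (b a n + 2 * a (n+1)) (b a (n+1)) := by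
    intro n
    rw [image_Ico01 (continuous_w a (n+1)) (strictMono_w (hposn n)), w_zero,
      w_one a (n+1) (by omega), b_succ]
    simp
  have huim : ∀ j : ℕ, u a N (j+1) '' (Ico 0 1)
      = Ico (binf a + j * (lenJ a / N)) (binf a + ((j:ℝ)+1) * (lenJ a / N)) := by
    intro j
    rw [image_Ico01 (continuous_u a N (j+1)) (strictMono_u hc (j+1)), u_eq, u_eq]
    ring_nf
  -- interval inclusions
  have hIco_sub : ∀ n : ℕ, Ico (b a n) (b a (n+1)) ⊆ Ico (0:ℝ) 1 := by
    intro n z hz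
    exact ⟨le_trans (b_nonneg hpos n) hz.1,
      lt_of_lt_of_le hz.2 (le_trans (b_le_binf hpos hsum (n+1)) hbinf_lt.le)⟩
  have hmid : ∀ n : ℕ, b a n + 2 * a (n+1) ≤ b a (n+1) := by
    intro n; rw [b_succ]; linarith [hposn n]
  have hVsub : ∀ n : ℕ, v a (n+1) '' A ⊆ Ico (b a n) (b a n + 2 * a (n+1)) := by
    intro n
    rw [← hvim n]; exact image_mono hA
  have hWsub : ∀ n : ℕ, w a (n+1) '' A ⊆ Ico (b a n + 2 * a (n+1)) (b a (n+1)) := by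
    intro n
    rw [← hwim n]; exact image_mono hA
  have hVWsub : ∀ n : ℕ, v a (n+1) '' A ∪ w a (n+1) '' A ⊆ Ico (b a n) (b a (n+1)) := by
    intro n
    refine union_subset ((hVsub n).trans ?_) ((hWsub n).trans ?_)
    · exact Ico_subset_Ico le_rfl (hmid n)
    · exact Ico_subset_Ico (by linarith [hposn n, b_nonneg hpos n]) le_rfl
  have hUsub : ∀ j : ℕ, j < N → u a N (j+1) '' A
      ⊆ Ico (binf a + j * (lenJ a / N)) (binf a + ((j:ℝ)+1) * (lenJ a / N)) := by
    intro j _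
    rw [← huim j]; exact image_mono hA
  have hUIco_sub : ∀ j : ℕ, j < N →
      Ico (binf a + (j:ℝ) * (lenJ a / N)) (binf a + ((j:ℝ)+1) * (lenJ a / N))
        ⊆ Ico (binf a) 1 := by
    intro j hj z hz
    have h1 : (0:ℝ) ≤ (j:ℝ) * (lenJ a / N) := by positivity
    have h2 : ((j:ℝ)+1) * (lenJ a / N) ≤ (N:ℝ) * (lenJ a / N) := by
      refine mul_le_mul_of_nonneg_right ?_ hc.le
      exact_mod_cast (by omega : j + 1 ≤ N)
    have hNL : (N:ℝ) * (lenJ a / N) = lenJ a := by field_simp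
    have h3 : binf a + ((j:ℝ)+1) * (lenJ a / N) ≤ 1 := by
      rw [hNL] at h2; unfold lenJ at h2 ⊢; linarith
    exact ⟨by linarith [hz.1], lt_of_lt_of_le hz.2 h3⟩
  -- the key set identity
  have key : T ⁻¹' A ∩ Ico (0:ℝ) 1
      = (⋃ n : ℕ, (v a (n+1) '' A ∪ w a (n+1) '' A))
        ∪ ⋃ j ∈ Finset.range N, u a N (j+1) '' A := by
    ext x
    constructor
    · rintro ⟨hxa, hxI⟩
      rw [mem_preimage] at hxa
      by_cases hxb : x < binf a
      · left
        obtain ⟨n, hn1, hn2⟩ := cover_b hpos hsum ⟨hxI.1, hxb⟩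
        refine mem_iUnion.2 ⟨n, ?_⟩
        by_cases hxm : x < b a n + 2 * a (n+1)
        · left
          have hxv : x ∈ v a (n+1) '' (Ico 0 1) := by rw [hvim n]; exact ⟨hn1, hxm⟩
          obtain ⟨y, hy, rfl⟩ := hxv
          have hTy : T (v a (n+1) y) = y := ((hTbr y hy).1 (n+1) (by omega)).1
          exact ⟨y, by rwa [hTy] at hxa, rfl⟩
        · right
          have hxw : x ∈ w a (n+1) '' (Ico 0 1) := by
            rw [hwim n]; exact ⟨le_of_not_gt hxm, hn2⟩
          obtain ⟨y, hy, rfl⟩ := hxw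
          have hTy : T (w a (n+1) y) = y := ((hTbr y hy).1 (n+1) (by omega)).2
          exact ⟨y, by rwa [hTy] at hxa, rfl⟩
      · right
        obtain ⟨j, hjN, hj1, hj2⟩ := cover_u hN hL ⟨le_of_not_gt hxb, hxI.2⟩
        have hxu : x ∈ u a N (j+1) '' (Ico 0 1) := by rw [huim j]; exact ⟨hj1, hj2⟩
        obtain ⟨y, hy, rfl⟩ := hxu
        have hTy : T (u a N (j+1) y) = y := (hTbr y hy).2 (j+1) (by omega) (by omega)
        exact mem_iUnion₂.2 ⟨j, Finset.mem_range.2 hjN, ⟨y, by rwa [hTy] at hxa, rfl⟩⟩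
    · intro hx
      rcases hx with hx | hx
      · obtain ⟨n, hx⟩ := mem_iUnion.1 hx
        have hxI : x ∈ Ico (0:ℝ) 1 := hIco_sub n (hVWsub n hx)
        rcases hx with ⟨y, hyA, rfl⟩ | ⟨y, hyA, rfl⟩
        · have hyI := hA hyA
          have hTy : T (v a (n+1) y) = y := ((hTbr y hyI).1 (n+1) (by omega)).1
          exact ⟨by rw [mem_preimage, hTy]; exact hyA, hxI⟩
        · have hyI := hA hyA
          have hTy : T (w a (n+1) y) = y := ((hTbr y hyI).1 (n+1) (by omega)).2
          exact ⟨by rw [mem_preimage, hTy]; exact hyA, hxI⟩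
      · obtain ⟨j, hjmem, hx⟩ := mem_iUnion₂.1 hx
        have hjN := Finset.mem_range.1 hjmem
        have hxI : x ∈ Ico (0:ℝ) 1 := by
          have h1 := hUIco_sub j hjN (hUsub j hjN hx)
          exact ⟨le_trans hbinf_nn h1.1, h1.2⟩
        obtain ⟨y, hyA, rfl⟩ := hx
        have hyI := hA hyA
        have hTy : T (u a N (j+1) y) = y := (hTbr y hyI).2 (j+1) (by omega) (by omega)
        exact ⟨by rw [mem_preimage, hTy]; exact hyA, hxI⟩
  -- measurability of the images
  have membv : ∀ n : ℕ, MeasurableEmbedding (v a (n+1)) := fun n =>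
    (continuous_v a (n+1)).measurableEmbedding (strictMono_v (hposn n)).injective
  have membw : ∀ n : ℕ, MeasurableEmbedding (w a (n+1)) := fun n =>
    (continuous_w a (n+1)).measurableEmbedding (strictMono_w (hposn n)).injective
  have membu : ∀ j : ℕ, MeasurableEmbedding (u a N (j+1)) := fun j =>
    (continuous_u a N (j+1)).measurableEmbedding (strictMono_u hc (j+1)).injective
  have mV : ∀ n : ℕ, MeasurableSet (v a (n+1) '' A) := fun n =>
    (membv n).measurableSet_image' hAm
  have mW : ∀ n : ℕ, MeasurableSet (w a (n+1) '' A) := fun n =>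
    (membw n).measurableSet_image' hAm
  have mU : ∀ j : ℕ, MeasurableSet (u a N (j+1) '' A) := fun j =>
    (membu j).measurableSet_image' hAm
  -- disjointness
  have hdisjIco : ∀ m n : ℕ, m ≠ n →
      Disjoint (Ico (b a m) (b a (m+1))) (Ico (b a n) (b a (n+1))) := by
    intro m n hmn
    rcases hmn.lt_or_gt with h | h
    · rw [Set.Ico_disjoint_Ico]
      exact le_trans (min_le_left _ _) (le_trans (b_mono hpos h) (le_max_right _ _))
    · rw [Set.Ico_disjoint_Ico]
      exact le_trans (min_le_right _ _) (le_trans (b_mono hpos h) (le_max_left _ _))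
  have hpairVW : Pairwise (Function.onFun Disjoint
      fun n : ℕ => v a (n+1) '' A ∪ w a (n+1) '' A) := by
    intro m n hmn
    exact (hdisjIco m n hmn).mono (hVWsub m) (hVWsub n)
  have hsub1 : (⋃ n : ℕ, (v a (n+1) '' A ∪ w a (n+1) '' A)) ⊆ Ico 0 (binf a) := by
    refine iUnion_subset fun n => (hVWsub n).trans ?_
    exact Ico_subset_Ico (b_nonneg hpos n) (b_le_binf hpos hsum (n+1))
  have hsub2 : (⋃ j ∈ Finset.range N, u a N (j+1) '' A) ⊆ Ico (binf a) 1 := by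
    refine iUnion₂_subset fun j hj => ?_
    exact (hUsub j (Finset.mem_range.1 hj)).trans (hUIco_sub j (Finset.mem_range.1 hj))
  have hdisjTop : Disjoint (⋃ n : ℕ, (v a (n+1) '' A ∪ w a (n+1) '' A))
      (⋃ j ∈ Finset.range N, u a N (j+1) '' A) :=
    (Set.Ico_disjoint_Ico_same).mono hsub1 hsub2
  have hpairU : (↑(Finset.range N) : Set ℕ).PairwiseDisjoint
      (fun j : ℕ => u a N (j+1) '' A) := by
    intro i hi j hj hij
    have hIJ : ∀ p q : ℕ, p < q → Disjoint
        (Ico (binf a + (p:ℝ) * (lenJ a / N)) (binf a + ((p:ℝ)+1) * (lenJ a / N)))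
        (Ico (binf a + (q:ℝ) * (lenJ a / N)) (binf a + ((q:ℝ)+1) * (lenJ a / N))) := by
      intro p q hpq
      rw [Set.Ico_disjoint_Ico]
      refine le_trans (min_le_left _ _) (le_trans ?_ (le_max_right _ _))
      have : ((p:ℝ)+1) ≤ (q:ℝ) := by exact_mod_cast hpq
      nlinarith [hc.le]
    rcases hij.lt_or_gt with h | h
    · exact Disjoint.mono (hUsub i (Finset.mem_range.1 hi)) (hUsub j (Finset.mem_range.1 hj))
        (hIJ i j h)
    · exact Disjoint.mono (hUsub i (Finset.mem_range.1 hi)) (hUsub j (Finset.mem_range.1 hj))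
        (hIJ j i h).symm
  -- compute the measure
  rw [key, measure_union hdisjTop
    ((Finset.range N).measurableSet_biUnion fun j _ => mU j),
    measure_iUnion hpairVW (fun n => (mV n).union (mW n)),
    measure_biUnion_finset hpairU (fun j _ => mU j)]
  have hVW : ∀ n : ℕ, volume (v a (n+1) '' A ∪ w a (n+1) '' A)
      = (∫⁻ x in A, ENNReal.ofReal (vd a (n+1) x))
        + ∫⁻ x in A, ENNReal.ofReal (wd a (n+1) x) := by
    intro n
    rw [measure_union (((Set.Ico_disjoint_Ico_same).mono (hVsub n) (hWsub n)))
      (mW n),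
      volume_image_of_deriv hAm (hasDerivAt_v a (n+1)) (strictMono_v (hposn n)).injective
        (fun x => (vd_pos (hposn n) x).le),
      volume_image_of_deriv hAm (hasDerivAt_w a (n+1)) (strictMono_w (hposn n)).injective
        (fun x => (wd_pos (hposn n) x).le)]
  have hU : ∀ j : ℕ, volume (u a N (j+1) '' A) = ENNReal.ofReal (lenJ a / N) * volume A := by
    intro j
    rw [volume_image_of_deriv hAm (hasDerivAt_u a N (j+1)) (strictMono_u hc (j+1)).injective
      (fun _ => hc.le)]
    simp [MeasureTheory.setLIntegral_const]
  simp only [hVW, hU]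
  -- sum the series
  have hmeasvd : ∀ n : ℕ, Measurable fun x => ENNReal.ofReal (vd a (n+1) x) := fun n =>
    (continuous_vd a (n+1)).measurable.ennreal_ofReal
  have hmeaswd : ∀ n : ℕ, Measurable fun x => ENNReal.ofReal (wd a (n+1) x) := fun n =>
    (continuous_wd a (n+1)).measurable.ennreal_ofReal
  have hsum1 : (∑' n : ℕ, ((∫⁻ x in A, ENNReal.ofReal (vd a (n+1) x))
      + ∫⁻ x in A, ENNReal.ofReal (wd a (n+1) x)))
      = ENNReal.ofReal (binf a) * volume A := by
    have h1 : ∀ n : ℕ, (∫⁻ x in A, ENNReal.ofReal (vd a (n+1) x))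
        + (∫⁻ x in A, ENNReal.ofReal (wd a (n+1) x))
        = ∫⁻ x in A, (ENNReal.ofReal (vd a (n+1) x) + ENNReal.ofReal (wd a (n+1) x)) :=
      fun n => (lintegral_add_left (hmeasvd n) _).symm
    rw [tsum_congr h1, ← lintegral_tsum (f := fun n x => ENNReal.ofReal (vd a (n+1) x)
      + ENNReal.ofReal (wd a (n+1) x)) (fun n => ((hmeasvd n).add (hmeaswd n)).aemeasurable)]
    have h2 : ∀ x : ℝ, (∑' n : ℕ, (ENNReal.ofReal (vd a (n+1) x)
        + ENNReal.ofReal (wd a (n+1) x))) = ENNReal.ofReal (binf a) := by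
      intro x
      have h3 : ∀ n : ℕ, ENNReal.ofReal (vd a (n+1) x) + ENNReal.ofReal (wd a (n+1) x)
          = ENNReal.ofReal (4 * a (n+1)) := fun n => by
        rw [← ENNReal.ofReal_add (vd_pos (hposn n) x).le (wd_pos (hposn n) x).le, vd_add_wd]
      rw [tsum_congr h3,
        ← ENNReal.ofReal_tsum_of_nonneg (fun n => by linarith [hposn n]) (hsum.mul_left 4)]
      congr 1
      unfold binf
      rw [tsum_mul_left]
    calc (∫⁻ x in A, ∑' n : ℕ, (ENNReal.ofReal (vd a (n+1) x)
          + ENNReal.ofReal (wd a (n+1) x)))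
        = ∫⁻ _ in A, ENNReal.ofReal (binf a) := lintegral_congr fun x => h2 x
      _ = ENNReal.ofReal (binf a) * volume A := by
          simp [MeasureTheory.setLIntegral_const]
  rw [hsum1, Finset.sum_const, Finset.card_range]
  have hNc : (N : ENNReal) * ENNReal.ofReal (lenJ a / N) = ENNReal.ofReal (lenJ a) := by
    rw [← ENNReal.ofReal_natCast N, ← ENNReal.ofReal_mul (by positivity)]
    congr 1
    field_simp
  rw [nsmul_eq_mul, ← mul_assoc, hNc, ← add_mul,
    ← ENNReal.ofReal_add hbinf_nn hL.le]
  have hone : binf a + lenJ a = 1 := by unfold lenJ; ring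
  rw [hone]
  simp


end Gouezel
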